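/- arXiv:0709.3953 — 6 statements merged into one kernel-verified Lean document; each statement's English description precedes it below -/
import Mathlib

section
/- For nonnegative integers a_1,...,a_m with a_1+...+a_m < m, the sum of (|I|-1)!·(m-|I|)! over all nonempty subsets I of {1,...,m} satisfying sum_{i in I} a_i = |I|-1 equals m!. -/
open Finset

namespace AuxCL

variable {m : ℕ}

/-- Sum of `a` over a finset. -/
def sF (a : Fin m → ℕ) (N : Finset (Fin m)) : ℕ := ∑ i ∈ N, a i

/-- Count of orderings of `N` all of whose prefix sums satisfy `Σ ≥ len - c`,
defined by removing the last element. -/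
def B (a : Fin m → ℕ) (N : Finset (Fin m)) (c : ℕ) : ℕ :=
  if N = ∅ then 1
  else if N.card ≤ sF a N + c then ∑ x ∈ N.attach, B a (N.erase x.1) c else 0
termination_by N.card
decreasing_by exact Finset.card_erase_lt_of_mem x.2

/-- Count of orderings of `N` all of whose prefix sums satisfy `Σ ≤ len + d`. -/
def G (a : Fin m → ℕ) (N : Finset (Fin m)) (d : ℕ) : ℕ :=
  if N = ∅ then 1
  else if sF a N ≤ N.card + d then ∑ x ∈ N.attach, G a (N.erase x.1) d else 0
termination_by N.card
decreasing_by exact Finset.card_erase_lt_of_mem x.2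

/-- Count of orderings of `N` all of whose prefix sums satisfy `Σ ≤ len - 1`. -/
def g (a : Fin m → ℕ) (N : Finset (Fin m)) : ℕ :=
  if N = ∅ then 1
  else if sF a N + 1 ≤ N.card then ∑ x ∈ N.attach, g a (N.erase x.1) else 0
termination_by N.card
decreasing_by exact Finset.card_erase_lt_of_mem x.2

lemma B_empty (a : Fin m → ℕ) (c : ℕ) : B a ∅ c = 1 := by rw [B]; simp

lemma G_empty (a : Fin m → ℕ) (d : ℕ) : G a ∅ d = 1 := by rw [G]; simp

lemma g_empty (a : Fin m → ℕ) : g a ∅ = 1 := by rw [g]; simp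

lemma B_eq (a : Fin m → ℕ) (N : Finset (Fin m)) (c : ℕ) (hN : N ≠ ∅) :
    B a N c = if N.card ≤ sF a N + c then ∑ x ∈ N, B a (N.erase x) c else 0 := by
  rw [B, if_neg hN, Finset.sum_attach N (fun x => B a (N.erase x) c)]

lemma G_eq (a : Fin m → ℕ) (N : Finset (Fin m)) (d : ℕ) (hN : N ≠ ∅) :
    G a N d = if sF a N ≤ N.card + d then ∑ x ∈ N, G a (N.erase x) d else 0 := by
  rw [G, if_neg hN, Finset.sum_attach N (fun x => G a (N.erase x) d)]

lemma g_eq (a : Fin m → ℕ) (N : Finset (Fin m)) (hN : N ≠ ∅) :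
    g a N = if sF a N + 1 ≤ N.card then ∑ x ∈ N, g a (N.erase x) else 0 := by
  rw [g, if_neg hN, Finset.sum_attach N (fun x => g a (N.erase x))]

lemma sF_erase (a : Fin m → ℕ) {N : Finset (Fin m)} {x : Fin m} (hx : x ∈ N) :
    a x + sF a (N.erase x) = sF a N := Finset.add_sum_erase N a hx

lemma a_le_sF (a : Fin m → ℕ) {N : Finset (Fin m)} {x : Fin m} (hx : x ∈ N) :
    a x ≤ sF a N := Finset.single_le_sum (fun i _ => Nat.zero_le _) hx

/-- Strong induction on cardinality. -/
lemma card_ind (P : Finset (Fin m) → Prop)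
    (h : ∀ N, (∀ N', N'.card < N.card → P N') → P N) : ∀ N, P N := by
  have key : ∀ k (N : Finset (Fin m)), N.card ≤ k → P N := by
    intro k
    induction k with
    | zero => exact fun N hN => h N fun N' h' => absurd h' (by omega)
    | succ k ih => exact fun N _ => h N fun N' h' => ih N' (by omega)
  exact fun N => key N.card N le_rfl

lemma erase_ne_empty {N : Finset (Fin m)} {x : Fin m} (hx : x ∈ N) (h2 : 2 ≤ N.card) :
    N.erase x ≠ ∅ := by
  have hce := Finset.card_erase_of_mem hx
  intro hE
  rw [hE] at hce
  simp at hce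
  omega

/-- Closed form for `g`. -/
lemma gval (a : Fin m → ℕ) :
    ∀ N : Finset (Fin m), sF a N < N.card →
      g a N = (N.card - 1).factorial * (N.card - sF a N) := by
  refine card_ind _ ?_
  intro N IH hs
  have hN : N ≠ ∅ := by
    intro h; subst h; simp [sF] at hs
  rw [g_eq a N hN, if_pos (by omega)]
  rcases Nat.lt_or_ge 1 N.card with h2 | h1
  · -- N.card ≥ 2
    have key : ∀ x ∈ N, g a (N.erase x) =
        (N.card - 2).factorial * ((N.card - 1 - sF a N) + a x) := by
      intro x hx
      have hax : a x ≤ sF a N := a_le_sF a hx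
      have hce : (N.erase x).card = N.card - 1 := Finset.card_erase_of_mem hx
      have hse : sF a (N.erase x) = sF a N - a x := by
        have := sF_erase a hx; omega
      rcases Nat.lt_or_ge (sF a N - a x) (N.card - 1) with hlt | hge
      · have hrec := IH (N.erase x) (by omega) (by rw [hce, hse]; exact hlt)
        rw [hrec, hce, hse]
        have e1 : N.card - 1 - 1 = N.card - 2 := by omega
        have e2 : N.card - 1 - (sF a N - a x) = (N.card - 1 - sF a N) + a x := by omega
        rw [e1, e2]
      · have hne : N.erase x ≠ ∅ := erase_ne_empty hx (by omega)
        rw [g_eq a _ hne, if_neg (by rw [hce, hse]; omega)]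
        have e2 : (N.card - 1 - sF a N) + a x = 0 := by omega
        rw [e2, mul_zero]
    rw [Finset.sum_congr rfl key, ← Finset.mul_sum, Finset.sum_add_distrib,
        Finset.sum_const, smul_eq_mul]
    have hsum : ∑ x ∈ N, a x = sF a N := rfl
    rw [hsum]
    obtain ⟨d, hd⟩ : ∃ d, N.card = sF a N + d + 1 := ⟨N.card - sF a N - 1, by omega⟩
    have e1 : N.card - 1 - sF a N = d := by omega
    have e2 : N.card - sF a N = d + 1 := by omega
    have e3 : (N.card - 1).factorial = (N.card - 1) * (N.card - 2).factorial := by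
      have harg : N.card - 1 - 1 = N.card - 2 := by omega
      rw [← harg, Nat.mul_factorial_pred (by omega : N.card - 1 ≠ 0)]
    have e4 : N.card - 1 = sF a N + d := by omega
    rw [e1, e2, e3, e4, hd]
    ring
  · -- N.card = 1
    have hc : N.card = 1 := by omega
    have hs0 : sF a N = 0 := by omega
    have key : ∀ x ∈ N, g a (N.erase x) = 1 := by
      intro x hx
      have : N.erase x = ∅ := by
        apply Finset.card_eq_zero.mp
        rw [Finset.card_erase_of_mem hx, hc]
      rw [this, g_empty]
    rw [Finset.sum_congr rfl key, Finset.sum_const, smul_eq_mul, hc, hs0]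
    simp

/-- Front recursion for `g`. -/
lemma g_front (a : Fin m → ℕ) :
    ∀ N : Finset (Fin m), N ≠ ∅ →
      g a N = ∑ x ∈ N.filter (fun x => a x = 0), G a (N.erase x) 0 := by
  refine card_ind _ ?_
  intro N IH hN
  have hcard : 0 < N.card := Finset.card_pos.mpr (Finset.nonempty_iff_ne_empty.mpr hN)
  rcases Nat.lt_or_ge 1 N.card with h2 | h1
  · -- N.card ≥ 2
    rw [g_eq a N hN]
    have rhs_expand : ∀ y ∈ N.filter (fun x => a x = 0), G a (N.erase y) 0 =
        if sF a N + 1 ≤ N.card then ∑ x ∈ N.erase y, G a ((N.erase y).erase x) 0 else 0 := by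
      intro y hy
      rw [Finset.mem_filter] at hy
      have hne : N.erase y ≠ ∅ := erase_ne_empty hy.1 h2
      have hse : sF a (N.erase y) = sF a N := by
        have := sF_erase a hy.1; rw [hy.2] at this; omega
      have hce : (N.erase y).card = N.card - 1 := Finset.card_erase_of_mem hy.1
      rw [G_eq a _ _ hne, hse, hce]
      by_cases hg : sF a N + 1 ≤ N.card
      · rw [if_pos (by omega), if_pos hg]
      · rw [if_neg (by omega), if_neg hg]
    rw [Finset.sum_congr rfl rhs_expand]
    by_cases hg : sF a N + 1 ≤ N.card
    · rw [if_pos hg]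
      simp only [if_pos hg]
      have lhs_expand : ∀ x ∈ N, g a (N.erase x) =
          ∑ y ∈ (N.filter (fun z => a z = 0)).erase x, G a ((N.erase x).erase y) 0 := by
        intro x hx
        have hne : N.erase x ≠ ∅ := erase_ne_empty hx h2
        rw [IH (N.erase x) (by have := Finset.card_erase_of_mem hx; omega) hne]
        congr 1
        ext y
        simp only [Finset.mem_filter, Finset.mem_erase]
        tauto
      rw [Finset.sum_congr rfl lhs_expand]
      rw [Finset.sum_comm'
        (show ∀ x y, (x ∈ N ∧ y ∈ (N.filter (fun z => a z = 0)).erase x) ↔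
            (x ∈ N.erase y ∧ y ∈ N.filter (fun z => a z = 0)) by
          intro x y
          simp only [Finset.mem_erase, Finset.mem_filter]
          tauto)]
      refine Finset.sum_congr rfl fun y _ => Finset.sum_congr rfl fun x _ => ?_
      congr 1
      ext z
      simp only [Finset.mem_erase]
      tauto
    · rw [if_neg hg]
      symm
      exact Finset.sum_eq_zero fun y hy => by rw [if_neg hg]
  · -- N.card = 1
    have hcN : N.card = 1 := by omega
    obtain ⟨y, rfl⟩ := Finset.card_eq_one.mp hcN
    have hsy : sF a {y} = a y := by simp [sF]
    have hc1 : ({y} : Finset (Fin m)).card = 1 := by simp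
    rw [g_eq a _ hN, Finset.filter_singleton]
    by_cases hy : a y = 0
    · rw [if_pos (by rw [hsy, hc1]; omega), if_pos hy, Finset.sum_singleton,
          Finset.sum_singleton, Finset.erase_singleton, g_empty, G_empty]
    · rw [if_neg (by rw [hsy, hc1]; omega), if_neg hy, Finset.sum_empty]

/-- Front recursion for `B`. -/
lemma B_front (a : Fin m → ℕ) :
    ∀ N : Finset (Fin m), N ≠ ∅ → ∀ c : ℕ,
      B a N c = ∑ x ∈ N.filter (fun x => 1 ≤ a x + c), B a (N.erase x) (a x + c - 1) := by
  refine card_ind (fun N => N ≠ ∅ → ∀ c : ℕ, _) ?_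
  intro N IH hN c
  have hcard : 0 < N.card := Finset.card_pos.mpr (Finset.nonempty_iff_ne_empty.mpr hN)
  rcases Nat.lt_or_ge 1 N.card with h2 | h1
  · -- N.card ≥ 2
    rw [B_eq a N c hN]
    have rhs_expand : ∀ y ∈ N.filter (fun x => 1 ≤ a x + c), B a (N.erase y) (a y + c - 1) =
        if N.card ≤ sF a N + c then
          ∑ x ∈ N.erase y, B a ((N.erase y).erase x) (a y + c - 1) else 0 := by
      intro y hy
      rw [Finset.mem_filter] at hy
      have hne : N.erase y ≠ ∅ := erase_ne_empty hy.1 h2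
      have hay : a y ≤ sF a N := a_le_sF a hy.1
      have hse : sF a (N.erase y) = sF a N - a y := by
        have := sF_erase a hy.1; omega
      have hce : (N.erase y).card = N.card - 1 := Finset.card_erase_of_mem hy.1
      rw [B_eq a _ _ hne, hse, hce]
      by_cases hg : N.card ≤ sF a N + c
      · rw [if_pos (by omega), if_pos hg]
      · rw [if_neg (by omega), if_neg hg]
    rw [Finset.sum_congr rfl rhs_expand]
    by_cases hg : N.card ≤ sF a N + c
    · rw [if_pos hg]
      simp only [if_pos hg]
      have lhs_expand : ∀ x ∈ N, B a (N.erase x) c =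
          ∑ y ∈ (N.filter (fun z => 1 ≤ a z + c)).erase x,
            B a ((N.erase x).erase y) (a y + c - 1) := by
        intro x hx
        have hne : N.erase x ≠ ∅ := erase_ne_empty hx h2
        rw [IH (N.erase x) (by have := Finset.card_erase_of_mem hx; omega) hne c]
        refine Finset.sum_congr ?_ fun y _ => rfl
        ext y
        simp only [Finset.mem_filter, Finset.mem_erase]
        tauto
      rw [Finset.sum_congr rfl lhs_expand]
      rw [Finset.sum_comm'
        (show ∀ x y, (x ∈ N ∧ y ∈ (N.filter (fun z => 1 ≤ a z + c)).erase x) ↔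
            (x ∈ N.erase y ∧ y ∈ N.filter (fun z => 1 ≤ a z + c)) by
          intro x y
          simp only [Finset.mem_erase, Finset.mem_filter]
          tauto)]
      refine Finset.sum_congr rfl fun y _ => Finset.sum_congr rfl fun x _ => ?_
      congr 1
      ext z
      simp only [Finset.mem_erase]
      tauto
    · rw [if_neg hg]
      symm
      exact Finset.sum_eq_zero fun y hy => by rw [if_neg hg]
  · -- N.card = 1
    have hcN : N.card = 1 := by omega
    obtain ⟨y, rfl⟩ := Finset.card_eq_one.mp hcN
    have hsy : sF a {y} = a y := by simp [sF]
    have hc1 : ({y} : Finset (Fin m)).card = 1 := by simp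
    rw [B_eq a _ c hN, Finset.filter_singleton]
    by_cases hy : 1 ≤ a y + c
    · rw [if_pos (by rw [hsy, hc1]; omega), if_pos hy, Finset.sum_singleton,
          Finset.sum_singleton, Finset.erase_singleton, B_empty, B_empty]
    · rw [if_neg (by rw [hsy, hc1]; omega), if_neg hy, Finset.sum_empty]

/-- Reversal duality between `B` and `G`. -/
lemma dual (a : Fin m → ℕ) :
    ∀ N : Finset (Fin m), ∀ c : ℕ,
      B a N c = if N.card ≤ sF a N + c then G a N (sF a N + c - N.card) else 0 := by
  refine card_ind (fun N => ∀ c : ℕ, _) ?_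
  intro N IH c
  by_cases hN : N = ∅
  · subst hN
    rw [B_empty, if_pos (by simp), G_empty]
  have hcard : 0 < N.card := Finset.card_pos.mpr (Finset.nonempty_iff_ne_empty.mpr hN)
  rw [B_front a N hN c]
  have per : ∀ x ∈ N.filter (fun x => 1 ≤ a x + c), B a (N.erase x) (a x + c - 1) =
      if N.card ≤ sF a N + c then G a (N.erase x) (sF a N + c - N.card) else 0 := by
    intro x hx
    rw [Finset.mem_filter] at hx
    have hax : a x ≤ sF a N := a_le_sF a hx.1
    have hse : sF a (N.erase x) = sF a N - a x := by
      have := sF_erase a hx.1; omega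
    have hce : (N.erase x).card = N.card - 1 := Finset.card_erase_of_mem hx.1
    rw [IH (N.erase x) (by omega) (a x + c - 1), hse, hce]
    by_cases hg : N.card ≤ sF a N + c
    · rw [if_pos (by omega), if_pos hg]
      congr 1
      omega
    · rw [if_neg (by omega), if_neg hg]
  rw [Finset.sum_congr rfl per]
  by_cases hg : N.card ≤ sF a N + c
  · simp only [if_pos hg]
    rw [G_eq a N _ hN, if_pos (by omega)]
    rw [Finset.sum_filter]
    refine Finset.sum_congr rfl fun x hxN => ?_
    by_cases hxc : 1 ≤ a x + c
    · rw [if_pos hxc]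
    · rw [if_neg hxc]
      have hax0 : a x = 0 := by omega
      have hc0 : c = 0 := by omega
      have hax : a x ≤ sF a N := a_le_sF a hxN
      have hsge : N.card ≤ sF a N := by omega
      have hse : sF a (N.erase x) = sF a N := by
        have := sF_erase a hxN; omega
      have hne : N.erase x ≠ ∅ := by
        intro hE
        have h0 : sF a (N.erase x) = 0 := by rw [hE]; simp [sF]
        omega
      have hneg : ¬ (sF a (N.erase x) ≤ (N.erase x).card + (sF a N + c - N.card)) := by
        rw [hse, Finset.card_erase_of_mem hxN]
        omega
      symm
      rw [G_eq a _ _ hne, if_neg hneg]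
  · simp only [if_neg hg]
    exact Finset.sum_eq_zero fun x _ => rfl

/-- Cycle-lemma count. -/
lemma BG (a : Fin m → ℕ) (M : Finset (Fin m)) (hs : sF a M + 1 = M.card) :
    ∑ x ∈ M, B a (M.erase x) 0 = (M.card - 1).factorial := by
  have hM : M ≠ ∅ := by
    intro h; subst h; simp [sF] at hs
  have per : ∀ x ∈ M, B a (M.erase x) 0 =
      if a x = 0 then G a (M.erase x) 0 else 0 := by
    intro x hx
    have hax : a x ≤ sF a M := a_le_sF a hx
    have hse : sF a (M.erase x) = sF a M - a x := by
      have := sF_erase a hx; omega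
    have hce : (M.erase x).card = M.card - 1 := Finset.card_erase_of_mem hx
    rw [dual a (M.erase x) 0, hse, hce]
    by_cases h0 : a x = 0
    · rw [if_pos (by omega), if_pos h0]
      congr 1
      omega
    · rw [if_neg (by omega), if_neg h0]
  rw [Finset.sum_congr rfl per, ← Finset.sum_filter, ← g_front a M hM,
      gval a M (by omega)]
  have : M.card - sF a M = 1 := by omega
  rw [this, mul_one]

/-- The sum from the theorem, over an arbitrary base finset. -/
def T (a : Fin m → ℕ) (M : Finset (Fin m)) : ℕ :=
  ∑ J ∈ M.powerset, if J ≠ ∅ ∧ sF a J + 1 = J.card then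
    (J.card - 1).factorial * (M.card - J.card).factorial else 0

lemma swap_sum (M : Finset (Fin m)) (F : Finset (Fin m) → ℕ) :
    ∑ x ∈ M, ∑ J ∈ (M.erase x).powerset, F J
      = ∑ J ∈ M.powerset, (M.card - J.card) * F J := by
  have h1 : ∀ x : Fin m, (M.erase x).powerset = M.powerset.filter (fun J => x ∉ J) := by
    intro x
    ext J
    simp only [Finset.mem_powerset, Finset.subset_erase, Finset.mem_filter]
  calc ∑ x ∈ M, ∑ J ∈ (M.erase x).powerset, F J
      = ∑ x ∈ M, ∑ J ∈ M.powerset, if x ∉ J then F J else 0 := by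
        refine Finset.sum_congr rfl fun x _ => ?_
        rw [h1 x, Finset.sum_filter]
    _ = ∑ J ∈ M.powerset, ∑ x ∈ M, if x ∉ J then F J else 0 := Finset.sum_comm
    _ = ∑ J ∈ M.powerset, (M.card - J.card) * F J := by
        refine Finset.sum_congr rfl fun J hJ => ?_
        rw [Finset.mem_powerset] at hJ
        rw [← Finset.sum_filter, Finset.sum_const, smul_eq_mul]
        congr 1
        rw [← Finset.card_sdiff_of_subset hJ]
        congr 1
        ext x
        simp only [Finset.mem_filter, Finset.mem_sdiff]

lemma Tstep (a : Fin m → ℕ) (M : Finset (Fin m)) :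
    T a M = (∑ x ∈ M, T a (M.erase x)) +
      (if M ≠ ∅ ∧ sF a M + 1 = M.card then (M.card - 1).factorial else 0) := by
  have hTx : ∀ x ∈ M, T a (M.erase x) = ∑ J ∈ (M.erase x).powerset,
      (if J ≠ ∅ ∧ sF a J + 1 = J.card then
        (J.card - 1).factorial * (M.card - 1 - J.card).factorial else 0) := by
    intro x hx
    unfold T
    rw [Finset.card_erase_of_mem hx]
  rw [Finset.sum_congr rfl hTx, swap_sum]
  unfold T
  have per : ∀ J ∈ M.powerset,
      (if J ≠ ∅ ∧ sF a J + 1 = J.card then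
        (J.card - 1).factorial * (M.card - J.card).factorial else 0)
      = (M.card - J.card) * (if J ≠ ∅ ∧ sF a J + 1 = J.card then
          (J.card - 1).factorial * (M.card - 1 - J.card).factorial else 0)
        + (if J = M then
            (if M ≠ ∅ ∧ sF a M + 1 = M.card then (M.card - 1).factorial else 0) else 0) := by
    intro J hJ
    rw [Finset.mem_powerset] at hJ
    by_cases hJM : J = M
    · subst hJM
      simp [Nat.sub_self]
    · rw [if_neg hJM, add_zero]
      have hlt : J.card < M.card :=
        Finset.card_lt_card (Finset.ssubset_iff_subset_ne.mpr ⟨hJ, hJM⟩)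
      by_cases hadm : J ≠ ∅ ∧ sF a J + 1 = J.card
      · rw [if_pos hadm, if_pos hadm]
        have hfac : (M.card - J.card).factorial
            = (M.card - J.card) * (M.card - 1 - J.card).factorial := by
          have h2 : M.card - J.card - 1 = M.card - 1 - J.card := by omega
          rw [← h2, ← Nat.mul_factorial_pred (by omega : M.card - J.card ≠ 0)]
        rw [hfac]
        ring
      · rw [if_neg hadm, if_neg hadm, mul_zero]
  rw [Finset.sum_congr rfl per, Finset.sum_add_distrib]
  congr 1
  rw [Finset.sum_ite_eq' M.powerset M
    (fun _ => if M ≠ ∅ ∧ sF a M + 1 = M.card then (M.card - 1).factorial else 0)]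
  rw [if_pos (Finset.mem_powerset_self M)]

/-- Main decomposition identity. -/
lemma TB (a : Fin m → ℕ) : ∀ M : Finset (Fin m), T a M + B a M 0 = M.card.factorial := by
  refine card_ind _ ?_
  intro M IH
  by_cases hM : M = ∅
  · subst hM
    rw [B_empty]
    simp [T]
  · have hm : 0 < M.card := Finset.card_pos.mpr (Finset.nonempty_iff_ne_empty.mpr hM)
    have hIH : ∀ x ∈ M, T a (M.erase x) + B a (M.erase x) 0 = (M.card - 1).factorial := by
      intro x hx
      have hce : (M.erase x).card = M.card - 1 := Finset.card_erase_of_mem hx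
      rw [← hce]
      exact IH _ (by omega)
    have hfact : M.card * (M.card - 1).factorial = M.card.factorial :=
      Nat.mul_factorial_pred hm.ne'
    have hsum : (∑ x ∈ M, T a (M.erase x)) + (∑ x ∈ M, B a (M.erase x) 0)
        = M.card * (M.card - 1).factorial := by
      rw [← Finset.sum_add_distrib, Finset.sum_congr rfl hIH, Finset.sum_const, smul_eq_mul]
    rw [Tstep]
    by_cases hge : M.card ≤ sF a M
    · have hBrec : B a M 0 = ∑ x ∈ M, B a (M.erase x) 0 := by
        rw [B_eq a M 0 hM]
        exact if_pos (by omega)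
      have hif : (if M ≠ ∅ ∧ sF a M + 1 = M.card then (M.card - 1).factorial else 0) = 0 := by
        rw [if_neg]
        rintro ⟨_, h⟩
        omega
      rw [hBrec, hif]
      omega
    · have hB0 : B a M 0 = 0 := by rw [B_eq a M 0 hM, if_neg (by omega)]
      rw [hB0]
      by_cases hcrit : sF a M + 1 = M.card
      · rw [if_pos ⟨hM, hcrit⟩]
        have hBGv := BG a M hcrit
        omega
      · rw [if_neg (by rintro ⟨_, h⟩; exact hcrit h)]
        have hBz : ∀ x ∈ M, B a (M.erase x) 0 = 0 := by
          intro x hx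
          have h2 : 2 ≤ M.card := by omega
          have hne : M.erase x ≠ ∅ := erase_ne_empty hx h2
          have hax : a x ≤ sF a M := a_le_sF a hx
          have hse : sF a (M.erase x) = sF a M - a x := by
            have := sF_erase a hx; omega
          have hneg : ¬ ((M.erase x).card ≤ sF a (M.erase x) + 0) := by
            rw [hse, Finset.card_erase_of_mem hx]
            omega
          rw [B_eq a _ 0 hne, if_neg hneg]
        have hsB : (∑ x ∈ M, B a (M.erase x) 0) = 0 :=
          Finset.sum_eq_zero hBz
        omega

end AuxCL

theorem sum_factorials_over_admissible_subsets (m : ℕ) (hm : 0 < m) (a : Fin m → ℕ)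
    (ha : ∑ i, a i < m) :
    ∑ I ∈ (Finset.univ : Finset (Fin m)).powerset.filter
        (fun I => I.Nonempty ∧ (∑ i ∈ I, a i) + 1 = I.card),
      (I.card - 1).factorial * (m - I.card).factorial = m.factorial := by
  haveI : Nonempty (Fin m) := ⟨⟨0, hm⟩⟩
  have huniv : (Finset.univ : Finset (Fin m)) ≠ ∅ :=
    Finset.nonempty_iff_ne_empty.mp Finset.univ_nonempty
  have hcard : (Finset.univ : Finset (Fin m)).card = m := by
    rw [Finset.card_univ, Fintype.card_fin]
  have hsF : AuxCL.sF a Finset.univ = ∑ i, a i := rfl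
  have hB : AuxCL.B a Finset.univ 0 = 0 := by
    rw [AuxCL.B_eq a Finset.univ 0 huniv, if_neg (by rw [hcard, hsF]; omega)]
  have hT := AuxCL.TB a Finset.univ
  rw [hB, add_zero, hcard] at hT
  rw [← hT]
  unfold AuxCL.T
  rw [Finset.sum_filter]
  refine Finset.sum_congr rfl fun J _ => ?_
  have hcond : (J.Nonempty ∧ (∑ i ∈ J, a i) + 1 = J.card)
      ↔ (J ≠ ∅ ∧ AuxCL.sF a J + 1 = J.card) := by
    rw [Finset.nonempty_iff_ne_empty]
    rfl
  rw [hcard]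
  by_cases h : J ≠ ∅ ∧ AuxCL.sF a J + 1 = J.card
  · rw [if_pos h, if_pos (hcond.mpr h)]
  · rw [if_neg h, if_neg (fun hc => h (hcond.mp hc))]
end

section
/- Let k_1,...,k_m be nonnegative integers and K an integer (with K ≥ sum of the k_i, or treating everything in a polynomial ring). Then sum over nonempty subsets I of [m] of K(I)^{[|I|-1]} · (K - K(I))^{[m-|I|]} equals m·K^{[m-1]}, where K(I)= sum_{i in I} k_i and x^{[p]} is the falling factorial. -/
open Finset Polynomial

def fall (x : ℤ) (p : ℕ) : ℤ := ∏ i ∈ Finset.range p, (x - i)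

lemma fall_zero (x : ℤ) : fall x 0 = 1 := by simp [fall]

lemma fall_succ (x : ℤ) (p : ℕ) : fall x (p+1) = fall x p * (x - p) :=
  Finset.prod_range_succ _ _

lemma fall_succ' (x : ℤ) (p : ℕ) : fall x (p+1) = x * fall (x-1) p := by
  rw [fall, Finset.prod_range_succ', fall]
  simp only [Nat.cast_zero, sub_zero]
  rw [mul_comm]
  congr 1
  exact Finset.prod_congr rfl (fun i _ => by push_cast; ring)

lemma fall_sub_fall (x : ℤ) (n : ℕ) :
    fall x n - fall (x-1) n = n * fall (x-1) (n-1) := by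
  cases n with
  | zero => simp [fall_zero]
  | succ q =>
    rw [fall_succ' x q, fall_succ (x-1) q, Nat.add_sub_cancel]
    push_cast
    ring

lemma fall_add (x : ℤ) (s t : ℕ) : fall x (s+t) = fall x s * fall (x - s) t := by
  induction t with
  | zero => simp [fall_zero]
  | succ t ih =>
    rw [show s + (t+1) = (s+t)+1 from rfl, fall_succ, ih, fall_succ]
    push_cast; ring

lemma fall_neg (a : ℤ) (q : ℕ) : fall (-a) q = (-1)^q * fall (a + q - 1) q := by
  induction q with
  | zero => simp [fall_zero]
  | succ q ih =>
    have h : fall (a + (q+1:ℕ) - 1) (q + 1) = (a+q) * fall (a + q - 1) q := by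
      rw [show (a + (q+1:ℕ) - 1) = (a + q) by push_cast; ring, fall_succ' (a+q) q]
    rw [fall_succ, ih, h]
    ring

lemma fall_mul_fall (a : ℤ) (p q : ℕ) :
    fall a p * fall (a + q) (q+1) = a * fall (a + q) (p + q) := by
  have h1 : fall (a+q) (q+1) = fall (a+q) q * a := by
    rw [fall_succ]; congr 1; ring
  have h2 : fall (a+q) (p+q) = fall (a+q) q * fall a p := by
    rw [Nat.add_comm p q, fall_add]; congr 2; ring
  rw [h1, h2]; ring

lemma fall_merge (a : ℤ) (c m : ℕ) (h1 : 1 ≤ c) (h2 : c ≤ m) (hm : 2 ≤ m) :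
    fall a (c-1) * fall (a + (m-c : ℕ) - 1) (m-c) = a * fall (a + (m-c : ℕ) - 1) (m-2) := by
  by_cases hcm : c = m
  · subst hcm
    simp only [Nat.sub_self, Nat.cast_zero, add_zero, fall_zero, mul_one]
    rw [show c - 1 = (c-2) + 1 by omega, fall_succ' a (c-2)]
  · have hq : m - c = (m - c - 1) + 1 := by omega
    set q := m - c - 1 with hqdef
    have harg : a + ((m-c : ℕ) : ℤ) - 1 = a + q := by
      rw [hq]; push_cast; ring
    rw [harg, hq, fall_mul_fall a (c-1) q]
    have he : c - 1 + q = m - 2 := by omega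
    rw [he]

lemma neg_one_pow_sub (c m : ℕ) (h : c ≤ m) : ((-1:ℤ))^(m-c) = (-1)^m * (-1)^c := by
  have h1 : ((-1:ℤ))^(m-c) * (-1)^c = (-1)^m := by
    rw [← pow_add]; congr 1; omega
  have h2 : ((-1:ℤ))^c * (-1)^c = 1 := by
    rw [← pow_add, ← two_mul, pow_mul]; norm_num
  calc ((-1:ℤ))^(m-c) = ((-1:ℤ))^(m-c) * ((-1)^c * (-1)^c) := by rw [h2, mul_one]
    _ = ((-1:ℤ))^(m-c) * (-1)^c * (-1)^c := by ring
    _ = (-1)^m * (-1)^c := by rw [h1]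

lemma lemD {ι : Type*} [DecidableEq ι] (S : Finset ι) (a : ι → ℤ) :
    ∀ f : ℤ[X], f.degree < (S.card : ℕ) → ∀ x : ℤ,
      ∑ I ∈ S.powerset, (-1:ℤ)^I.card * f.eval (x + ∑ i ∈ I, a i) = 0 := by
  induction S using Finset.induction_on with
  | empty =>
    intro f hf x
    have hf0 : f = 0 := by simpa using hf
    simp [hf0]
  | @insert j S hjS ih =>
    intro f hf x
    rw [Finset.sum_powerset_insert hjS]
    have h2 : ∀ I ∈ S.powerset,
        (-1:ℤ)^(insert j I).card * f.eval (x + ∑ i ∈ insert j I, a i)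
        = -((-1:ℤ)^I.card * f.eval ((x + a j) + ∑ i ∈ I, a i)) := by
      intro I hI
      have hjI : j ∉ I := fun h => hjS (Finset.mem_powerset.mp hI h)
      rw [Finset.card_insert_of_notMem hjI, Finset.sum_insert hjI, pow_succ]
      ring_nf
    rw [Finset.sum_congr rfl h2]
    set g : ℤ[X] := f - f.comp (X + C (a j)) with hgdef
    have hgeval : ∀ y : ℤ, g.eval y = f.eval y - f.eval (y + a j) := by
      intro y; simp [hgdef, Polynomial.eval_comp]
    have hcard : (insert j S).card = S.card + 1 := Finset.card_insert_of_notMem hjS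
    rw [hcard] at hf
    have hgdeg : g.degree < (S.card : ℕ) := by
      by_cases h0 : f.natDegree = 0
      · obtain ⟨c, rfl⟩ := Polynomial.natDegree_eq_zero.mp h0
        have : g = 0 := by simp [hgdef]
        rw [this, Polynomial.degree_zero]
        exact WithBot.bot_lt_coe _
      · have hf0 : f ≠ 0 := fun h => h0 (by simp [h])
        have hnd1 : (X + C (a j)).natDegree = 1 := Polynomial.natDegree_X_add_C (a j)
        have hm : (X + C (a j)).leadingCoeff = 1 := (Polynomial.monic_X_add_C (a j)).leadingCoeff
        have hlead : (f.comp (X + C (a j))).leadingCoeff = f.leadingCoeff := by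
          rw [Polynomial.leadingCoeff_comp (by rw [hnd1]; exact one_ne_zero), hm, one_pow, mul_one]
        have hc0 : f.comp (X + C (a j)) ≠ 0 := by
          intro h
          apply hf0
          rw [← Polynomial.leadingCoeff_eq_zero, ← hlead, h, Polynomial.leadingCoeff_zero]
        have hcompdeg : f.degree = (f.comp (X + C (a j))).degree := by
          rw [Polynomial.degree_eq_natDegree hc0, Polynomial.degree_eq_natDegree hf0,
            Polynomial.natDegree_comp, hnd1, mul_one]
        have hlt : g.degree < f.degree :=
          Polynomial.degree_sub_lt hcompdeg hf0 hlead.symm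
        have hle : f.degree ≤ (S.card : ℕ) := by
          rw [Polynomial.degree_eq_natDegree hf0]
          have h3 : f.natDegree < S.card + 1 := by
            have h4 := hf
            rw [Polynomial.degree_eq_natDegree hf0] at h4
            exact_mod_cast h4
          exact_mod_cast Nat.lt_succ_iff.mp h3
        exact lt_of_lt_of_le hlt hle
    rw [← Finset.sum_add_distrib]
    have h3 : ∀ I ∈ S.powerset,
        (-1:ℤ)^I.card * f.eval (x + ∑ i ∈ I, a i)
          + -((-1:ℤ)^I.card * f.eval ((x + a j) + ∑ i ∈ I, a i))
        = (-1:ℤ)^I.card * g.eval (x + ∑ i ∈ I, a i) := by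
      intro I _
      rw [hgeval]
      have heq : (x + ∑ i ∈ I, a i) + a j = (x + a j) + ∑ i ∈ I, a i := by ring
      rw [heq]
      ring
    rw [Finset.sum_congr rfl h3]
    exact ih g hgdeg x

def lhsAux {ι : Type*} [DecidableEq ι] (S : Finset ι) (n : ℕ) (k : ι → ℤ) (K : ℤ) : ℤ :=
  ∑ I ∈ S.powerset.erase ∅,
    fall (∑ i ∈ I, k i) (I.card - 1) * fall (K - ∑ i ∈ I, k i) (n - I.card)

lemma stepC {ι : Type*} [DecidableEq ι] (S : Finset ι) (k : ι → ℤ) (m : ℕ)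
    (hS : S.card = m) (hm : 2 ≤ m) : lhsAux S m k 0 = 0 := by
  classical
  set Ψ : ℤ[X] := ∏ i ∈ Finset.range (m-2), (X + C ((m:ℤ) - 1 - i)) with hPsidef
  have hPsieval : ∀ u : ℤ, Ψ.eval u = fall (u + m - 1) (m-2) := by
    intro u
    rw [hPsidef, Polynomial.eval_prod, fall]
    exact Finset.prod_congr rfl (fun i _ => by simp; ring)
  have hPsideg : Ψ.degree = ((m-2 : ℕ) : WithBot ℕ) := by
    rw [hPsidef, Polynomial.degree_prod]
    have hd : ∀ i ∈ Finset.range (m-2), (X + C ((m:ℤ) - 1 - (i:ℕ))).degree = 1 :=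
      fun i _ => Polynomial.degree_X_add_C _
    rw [Finset.sum_congr rfl hd, Finset.sum_const, Finset.card_range]
    simp
  have hPhideg : (X * Ψ).degree = ((m-1 : ℕ) : WithBot ℕ) := by
    rw [Polynomial.degree_mul, Polynomial.degree_X, hPsideg]
    rw [← Nat.cast_one, ← Nat.cast_add]
    congr 1
    omega
  have hu : ∀ I : Finset ι, ∑ i ∈ I, (k i - 1) = ∑ i ∈ I, k i - I.card := by
    intro I
    rw [Finset.sum_sub_distrib, Finset.sum_const, nsmul_eq_mul, mul_one]
  have hterm : ∀ I ∈ S.powerset.erase ∅,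
      fall (∑ i ∈ I, k i) (I.card - 1) * fall (0 - ∑ i ∈ I, k i) (m - I.card)
      = (-1:ℤ)^m * ((-1:ℤ)^I.card *
          ((∑ i ∈ I, k i) * Ψ.eval (∑ i ∈ I, k i - I.card))) := by
    intro I hI
    have hne : I ≠ ∅ := (Finset.mem_erase.mp hI).1
    have hsub : I ⊆ S := Finset.mem_powerset.mp (Finset.mem_erase.mp hI).2
    have hc1 : 1 ≤ I.card := Finset.card_pos.mpr (Finset.nonempty_iff_ne_empty.mpr hne)
    have hcm : I.card ≤ m := hS ▸ Finset.card_le_card hsub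
    set a := ∑ i ∈ I, k i with hadef
    have harg : a + ((m - I.card : ℕ) : ℤ) - 1 = (a - I.card) + m - 1 := by
      rw [Nat.cast_sub hcm]; ring
    rw [zero_sub, fall_neg a (m - I.card), hPsieval,
      show fall a (I.card - 1) * ((-1:ℤ)^(m-I.card) * fall (a + (m - I.card : ℕ) - 1) (m-I.card))
        = (-1:ℤ)^(m-I.card) * (fall a (I.card - 1) * fall (a + (m - I.card : ℕ) - 1) (m-I.card)) from by ring,
      fall_merge a I.card m hc1 hcm hm, neg_one_pow_sub I.card m hcm, harg]
    ring
  rw [lhsAux, Finset.sum_congr rfl hterm, ← Finset.mul_sum]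
  have hempty : (-1:ℤ)^(∅:Finset ι).card *
      ((∑ i ∈ (∅:Finset ι), k i) * Ψ.eval (∑ i ∈ (∅:Finset ι), k i - (∅:Finset ι).card)) = 0 := by
    simp
  rw [Finset.sum_erase (s := S.powerset)
    (f := fun I : Finset ι => (-1:ℤ)^I.card * ((∑ i ∈ I, k i) * Ψ.eval (∑ i ∈ I, k i - I.card)))
    (a := (∅ : Finset ι)) hempty]
  have hsplit : ∀ I ∈ S.powerset,
      (-1:ℤ)^I.card * ((∑ i ∈ I, k i) * Ψ.eval (∑ i ∈ I, k i - I.card))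
      = (-1:ℤ)^I.card * ((X*Ψ).eval (0 + ∑ i ∈ I, (k i - 1)))
        + ∑ j ∈ I, (-1:ℤ)^I.card * Ψ.eval (∑ i ∈ I, k i - I.card) := by
    intro I _
    rw [Finset.sum_const, nsmul_eq_mul, Polynomial.eval_mul, Polynomial.eval_X, hu I, zero_add]
    ring
  rw [Finset.sum_congr rfl hsplit, Finset.sum_add_distrib]
  have hA : ∑ I ∈ S.powerset, (-1:ℤ)^I.card * ((X*Ψ).eval (0 + ∑ i ∈ I, (k i - 1))) = 0 := by
    apply lemD S (fun i => k i - 1) (X*Ψ)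
    rw [hPhideg, hS]
    exact_mod_cast (by omega : m - 1 < m)
  have hB : ∑ I ∈ S.powerset, (∑ j ∈ I, (-1:ℤ)^I.card * Ψ.eval (∑ i ∈ I, k i - I.card)) = 0 := by
    have hswap : ∑ I ∈ S.powerset, (∑ j ∈ I, (-1:ℤ)^I.card * Ψ.eval (∑ i ∈ I, k i - I.card))
        = ∑ j ∈ S, ∑ I ∈ S.powerset.filter (fun I => j ∈ I),
            (-1:ℤ)^I.card * Ψ.eval (∑ i ∈ I, k i - I.card) := by
      have h1 : ∀ I ∈ S.powerset, (∑ j ∈ I, (-1:ℤ)^I.card * Ψ.eval (∑ i ∈ I, k i - I.card))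
          = ∑ j ∈ S, (if j ∈ I then (-1:ℤ)^I.card * Ψ.eval (∑ i ∈ I, k i - I.card) else 0) := by
        intro I hI
        rw [Finset.sum_ite_mem, Finset.inter_eq_right.mpr (Finset.mem_powerset.mp hI)]
      rw [Finset.sum_congr rfl h1, Finset.sum_comm]
      exact Finset.sum_congr rfl (fun j _ => (Finset.sum_filter _ _).symm)
    rw [hswap]
    apply Finset.sum_eq_zero
    intro j hj
    have hbij : ∑ I ∈ S.powerset.filter (fun I => j ∈ I),
          (-1:ℤ)^I.card * Ψ.eval (∑ i ∈ I, k i - I.card)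
        = ∑ J ∈ (S.erase j).powerset,
            (-1:ℤ) * ((-1:ℤ)^J.card * Ψ.eval ((k j - 1) + ∑ i ∈ J, (k i - 1))) := by
      refine Finset.sum_bij' (fun I _ => I.erase j) (fun J _ => insert j J) ?_ ?_ ?_ ?_ ?_
      · intro I hI
        rw [Finset.mem_powerset]
        exact Finset.erase_subset_erase j (Finset.mem_powerset.mp (Finset.mem_filter.mp hI).1)
      · intro J hJ
        have hJsub := Finset.mem_powerset.mp hJ
        rw [Finset.mem_filter, Finset.mem_powerset]
        constructor
        · apply Finset.insert_subset hj
          exact hJsub.trans (Finset.erase_subset j S)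
        · exact Finset.mem_insert_self j J
      · intro I hI
        exact Finset.insert_erase (Finset.mem_filter.mp hI).2
      · intro J hJ
        exact Finset.erase_insert (fun h => (Finset.mem_erase.mp (Finset.mem_powerset.mp hJ h)).1 rfl)
      · intro I hI
        have hjI : j ∈ I := (Finset.mem_filter.mp hI).2
        have hjE : j ∉ I.erase j := Finset.notMem_erase j I
        have hcard : I.card = (I.erase j).card + 1 := by
          rw [Finset.card_erase_of_mem hjI]
          have : 1 ≤ I.card := Finset.card_pos.mpr ⟨j, hjI⟩
          omega
        have hsum : ∑ i ∈ I, (k i - 1) = (k j - 1) + ∑ i ∈ I.erase j, (k i - 1) := by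
          rw [← Finset.sum_insert (f := fun i => k i - 1) hjE, Finset.insert_erase hjI]
        rw [← hsum, hu I, hcard, pow_succ]
        ring
    rw [hbij, ← Finset.mul_sum]
    have h0 : ∑ J ∈ (S.erase j).powerset,
        ((-1:ℤ)^J.card * Ψ.eval ((k j - 1) + ∑ i ∈ J, (k i - 1))) = 0 := by
      apply lemD (S.erase j) (fun i => k i - 1) Ψ
      rw [hPsideg, Finset.card_erase_of_mem hj, hS]
      exact_mod_cast (by omega : m - 2 < m - 1)
    rw [h0, mul_zero]
  rw [hA, hB]
  ring

lemma erase_powerset_erase {ι : Type*} [DecidableEq ι] (S : Finset ι) (j : ι) :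
    (S.erase j).powerset.erase ∅ = (S.powerset.erase ∅).filter (fun I => j ∉ I) := by
  ext I
  simp only [Finset.mem_erase, Finset.mem_powerset, Finset.mem_filter, Finset.subset_erase]
  tauto

lemma main' {ι : Type*} [DecidableEq ι] (n : ℕ) :
    ∀ (S : Finset ι) (k : ι → ℤ) (K : ℤ), S.card = n →
      lhsAux S n k K = n * fall K (n-1) := by
  induction n with
  | zero =>
    intro S k K hS
    rw [Finset.card_eq_zero.mp hS, lhsAux]
    simp
  | succ n ih =>
    intro S k K hS
    have stepA : ∀ K : ℤ,
        lhsAux S (n+1) k K - lhsAux S (n+1) k (K-1)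
          = ((n:ℤ)+1) * fall K n - ((n:ℤ)+1) * fall (K-1) n := by
      intro K
      rw [lhsAux, lhsAux, ← Finset.sum_sub_distrib]
      have hdiff : ∀ I ∈ S.powerset.erase ∅,
          fall (∑ i ∈ I, k i) (I.card - 1) * fall (K - ∑ i ∈ I, k i) (n+1 - I.card)
            - fall (∑ i ∈ I, k i) (I.card - 1) * fall ((K-1) - ∑ i ∈ I, k i) (n+1 - I.card)
          = ((n+1-I.card : ℕ) : ℤ) *
              (fall (∑ i ∈ I, k i) (I.card - 1) * fall ((K-1) - ∑ i ∈ I, k i) (n - I.card)) := by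
        intro I hI
        have hsub : I ⊆ S := Finset.mem_powerset.mp (Finset.mem_erase.mp hI).2
        have hcm : I.card ≤ n+1 := hS ▸ Finset.card_le_card hsub
        have h1 : (K-1) - ∑ i ∈ I, k i = (K - ∑ i ∈ I, k i) - 1 := by ring
        rw [← mul_sub, h1, fall_sub_fall (K - ∑ i ∈ I, k i) (n+1-I.card)]
        have h2 : n + 1 - I.card - 1 = n - I.card := by omega
        rw [h2]
        ring
      rw [Finset.sum_congr rfl hdiff]
      -- double counting
      have hcount : ∀ I ∈ S.powerset.erase ∅,
          ((n+1-I.card : ℕ) : ℤ) *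
              (fall (∑ i ∈ I, k i) (I.card - 1) * fall ((K-1) - ∑ i ∈ I, k i) (n - I.card))
          = ∑ j ∈ S, (if j ∉ I then
              fall (∑ i ∈ I, k i) (I.card - 1) * fall ((K-1) - ∑ i ∈ I, k i) (n - I.card) else 0) := by
        intro I hI
        have hsub : I ⊆ S := Finset.mem_powerset.mp (Finset.mem_erase.mp hI).2
        rw [Finset.sum_ite, Finset.sum_const, Finset.sum_const_zero, add_zero, nsmul_eq_mul]
        congr 2
        rw [← Finset.sdiff_eq_filter, Finset.card_sdiff_of_subset hsub, hS]
      rw [Finset.sum_congr rfl hcount, Finset.sum_comm]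
      have hinner : ∀ j ∈ S,
          (∑ I ∈ S.powerset.erase ∅, if j ∉ I then
              fall (∑ i ∈ I, k i) (I.card - 1) * fall ((K-1) - ∑ i ∈ I, k i) (n - I.card) else 0)
          = ((n:ℤ)) * fall (K-1) (n-1) := by
        intro j hj
        rw [← Finset.sum_filter, ← erase_powerset_erase]
        have hcard : (S.erase j).card = n := by
          rw [Finset.card_erase_of_mem hj, hS]
          omega
        exact ih (S.erase j) k (K-1) hcard
      rw [Finset.sum_congr rfl hinner, Finset.sum_const, nsmul_eq_mul, hS]
      have h5 : (n:ℤ) * fall (K-1) (n-1) = fall K n - fall (K-1) n := (fall_sub_fall K n).symm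
      rw [h5]
      push_cast
      ring
    -- Step B: constancy in K
    have key : ∀ K : ℤ,
        lhsAux S (n+1) k K - ((n:ℤ)+1) * fall K n
          = lhsAux S (n+1) k 0 - ((n:ℤ)+1) * fall 0 n := by
      intro K
      induction K using Int.induction_on with
      | zero => rfl
      | succ i ihp =>
        have h := stepA ((i:ℤ)+1)
        rw [add_sub_cancel_right] at h
        linarith
      | pred i ihn =>
        have h := stepA (-(i:ℤ))
        linarith
    -- Step C: base at K = 0
    have base : lhsAux S (n+1) k 0 = ((n:ℤ)+1) * fall 0 n := by
      cases n with
      | zero =>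
        obtain ⟨j, rfl⟩ := Finset.card_eq_one.mp hS
        rw [lhsAux]
        rw [show ({j} : Finset ι).powerset.erase ∅ = {{j}} from rfl]
        simp [fall_zero]
      | succ t =>
        rw [stepC S k (t+2) hS (by omega)]
        rw [show fall 0 (t+1) = 0 from by rw [fall_succ']; ring]
        ring
    have hK := key K
    rw [base] at hK
    have : lhsAux S (n+1) k K = ((n:ℤ)+1) * fall K n := by linarith
    rw [this]
    push_cast
    rfl


theorem falling_subset_identity (m : ℕ) (k : Fin m → ℕ) (K : ℤ) :
    ∑ I ∈ (Finset.univ : Finset (Fin m)).powerset.filter (fun I => I.Nonempty),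
        fall (∑ i ∈ I, (k i : ℤ)) (I.card - 1) * fall (K - ∑ i ∈ I, (k i : ℤ)) (m - I.card)
      = m * fall K (m - 1) := by
  have h := main' m (Finset.univ : Finset (Fin m)) (fun i => (k i : ℤ)) K (by simp)
  rw [lhsAux] at h
  have hfe : (Finset.univ : Finset (Fin m)).powerset.filter (fun I => I.Nonempty)
      = (Finset.univ : Finset (Fin m)).powerset.erase ∅ := by
    ext I
    simp [Finset.nonempty_iff_ne_empty, and_comm]
  rw [hfe]
  exact h
end

section
/- Fix k ∈ [n] and let V_k = { v_I : I ⊆ [n]∖{k}, |I|=2 }, where (v_I)_S = 1 if |I∩S|=1, else 0, for S a 2-element subset of [n]. Then the images of the vectors in V_k under the quotient map ℝ^T → Q_n = ℝ^T/im(Φ_n) span Q_n. -/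
open Finset

noncomputable def Phi (n : ℕ) :
    (Fin n → ℝ) →ₗ[ℝ] ({S : Finset (Fin n) // S.card = 2} → ℝ) :=
  LinearMap.pi fun S => ∑ i ∈ S.1, LinearMap.proj i

def v (n : ℕ) (I : Finset (Fin n)) : {S : Finset (Fin n) // S.card = 2} → ℝ :=
  fun S => if (I ∩ S.1).card = 1 then 1 else 0

lemma Phi_apply (n : ℕ) (a : Fin n → ℝ) (S : {S : Finset (Fin n) // S.card = 2}) :
    Phi n a S = ∑ i ∈ S.1, a i := by
  simp [Phi]

lemma inter_card_two_iff {n : ℕ} {S S' : Finset (Fin n)} (hS : S.card = 2)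
    (hS' : S'.card = 2) : (S ∩ S').card = 2 ↔ S = S' := by
  constructor
  · intro h
    have h1 : S ∩ S' = S :=
      Finset.eq_of_subset_of_card_le Finset.inter_subset_left (by omega)
    have h2 : S ∩ S' = S' :=
      Finset.eq_of_subset_of_card_le Finset.inter_subset_right (by omega)
    rw [← h1, h2]
  · rintro rfl; simpa using hS

lemma pi_decomp {ι : Type*} [Fintype ι] [DecidableEq ι] (x : ι → ℝ) :
    x = ∑ i : ι, x i • (Pi.single i (1 : ℝ) : ι → ℝ) := by
  funext j
  rw [Finset.sum_apply, Finset.sum_eq_single j]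
  · simp [Pi.single_apply]
  · intro b _ hb
    simp [Pi.single_apply, hb.symm]
  · intro h; exact absurd (Finset.mem_univ j) h

lemma key1 (n : ℕ) [DecidableEq {S : Finset (Fin n) // S.card = 2}]
    (S : {S : Finset (Fin n) // S.card = 2}) :
    Phi n (fun i => if i ∈ S.1 then (1:ℝ) else 0)
      = v n S.1 + (2:ℝ) • (Pi.single S (1:ℝ) : {S : Finset (Fin n) // S.card = 2} → ℝ) := by
  classical
  funext S'
  rw [Pi.add_apply, Phi_apply]
  have hsum : ∑ i ∈ S'.1, (if i ∈ S.1 then (1:ℝ) else 0) = ((S.1 ∩ S'.1).card : ℝ) := by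
    rw [Finset.sum_boole]
    congr 2
    rw [Finset.filter_mem_eq_inter, Finset.inter_comm]
  rw [hsum]
  have hle : (S.1 ∩ S'.1).card ≤ 2 :=
    le_trans (Finset.card_le_card Finset.inter_subset_left) (le_of_eq S.2)
  by_cases h : S' = S
  · subst h
    simp [v, Finset.inter_self, S'.2, Pi.single_apply]
  · have h2 : (S.1 ∩ S'.1).card ≠ 2 := fun hh =>
      h (Subtype.ext ((inter_card_two_iff S.2 S'.2).mp hh)).symm
    have hcases : (S.1 ∩ S'.1).card = 0 ∨ (S.1 ∩ S'.1).card = 1 := by omega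
    rcases hcases with h0 | h1
    · simp [v, h0, Pi.single_apply, h]
    · simp [v, h1, Pi.single_apply, h]

lemma single_eq (n : ℕ) [DecidableEq {S : Finset (Fin n) // S.card = 2}]
    (S : {S : Finset (Fin n) // S.card = 2}) :
    Pi.single S (1:ℝ)
      = (2⁻¹ : ℝ) • (Phi n (fun i => if i ∈ S.1 then (1:ℝ) else 0) - v n S.1) := by
  rw [key1 n S, add_sub_cancel_left, smul_smul]
  norm_num

/-- The images in `Qₙ = ℝ^T / im Φₙ` of the vectors `v_S`, for `S` a two-element
subset of `[n] ∖ {k}`, span `Qₙ`. -/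
theorem Vk_spans (n : ℕ) (hn : 4 ≤ n) (k : Fin n) :
    Submodule.span ℝ
      ((fun S : Finset (Fin n) =>
          Submodule.Quotient.mk (p := LinearMap.range (Phi n)) (v n S)) ''
        {S : Finset (Fin n) | S.card = 2 ∧ k ∉ S}) = ⊤ := by
  classical
  set p := LinearMap.range (Phi n)
  set A : Set (Finset (Fin n)) := {S : Finset (Fin n) | S.card = 2 ∧ k ∉ S}
  have himg : ((fun S : Finset (Fin n) => Submodule.Quotient.mk (p := p) (v n S)) '' A)
      = p.mkQ '' (v n '' A) := by
    rw [Set.image_image]; rfl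
  rw [himg, ← Submodule.map_span, Submodule.map_mkQ_eq_top]
  set W : Submodule ℝ ({S : Finset (Fin n) // S.card = 2} → ℝ) :=
    p ⊔ Submodule.span ℝ (v n '' A) with hW
  have hPhi : ∀ a : Fin n → ℝ, Phi n a ∈ W :=
    fun a => Submodule.mem_sup_left ⟨a, rfl⟩
  have hvA : ∀ S : {S : Finset (Fin n) // S.card = 2}, k ∉ S.1 → v n S.1 ∈ W := by
    intro S hk
    exact Submodule.mem_sup_right (Submodule.subset_span ⟨S.1, ⟨S.2, hk⟩, rfl⟩)
  have hsingle : ∀ S : {S : Finset (Fin n) // S.card = 2}, k ∉ S.1 →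
      Pi.single S (1:ℝ) ∈ W := by
    intro S hk
    rw [single_eq n S]
    exact Submodule.smul_mem _ _ (Submodule.sub_mem _ (hPhi _) (hvA S hk))
  have hvAll : ∀ S : {S : Finset (Fin n) // S.card = 2}, v n S.1 ∈ W := by
    intro S
    by_cases hk : k ∈ S.1
    · obtain ⟨x, y, hxy, hS⟩ := Finset.card_eq_two.mp S.2
      obtain ⟨a, hak, hSa⟩ : ∃ a : Fin n, a ≠ k ∧ S.1 = {k, a} := by
        rw [hS] at hk
        rcases Finset.mem_insert.mp hk with h | h
        · subst h
          exact ⟨y, hxy.symm, hS⟩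
        · rw [Finset.mem_singleton] at h
          subst h
          exact ⟨x, hxy, by rw [hS, Finset.pair_comm]⟩
      set u : {S : Finset (Fin n) // S.card = 2} → ℝ :=
        Phi n (Pi.single k 1 - Pi.single a 1) - v n S.1 with hu
      have hu0 : ∀ S' : {S : Finset (Fin n) // S.card = 2}, k ∈ S'.1 → u S' = 0 := by
        intro S' hk'
        have hphi : Phi n (Pi.single k 1 - Pi.single a 1) S'
            = (if k ∈ S'.1 then (1:ℝ) else 0) - (if a ∈ S'.1 then (1:ℝ) else 0) := by
          rw [Phi_apply]
          simp only [Pi.sub_apply, Pi.single_apply]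
          rw [Finset.sum_sub_distrib, Finset.sum_ite_eq', Finset.sum_ite_eq']
        by_cases hha : a ∈ S'.1
        · have hSS' : S'.1 = S.1 := by
            refine (Finset.eq_of_subset_of_card_le ?_ ?_).symm
            · rw [hSa]
              intro z hz
              rcases Finset.mem_insert.mp hz with h | h
              · rwa [h]
              · rw [Finset.mem_singleton.mp h]; exact hha
            · rw [S.2, S'.2]
          have hc2 : (S.1 ∩ S'.1).card = 2 := by
            rw [hSS', Finset.inter_self, S.2]
          have hval : u S' = Phi n (Pi.single k 1 - Pi.single a 1) S' - v n S.1 S' := rfl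
          rw [hval, hphi]
          simp [v, hk', hha, hc2]
        · have hint : S.1 ∩ S'.1 = {k} := by
            rw [hSa]
            ext z
            simp only [Finset.mem_inter, Finset.mem_insert, Finset.mem_singleton]
            constructor
            · rintro ⟨h | h, hz⟩
              · exact h
              · exact absurd (h ▸ hz) hha
            · rintro rfl; exact ⟨Or.inl rfl, hk'⟩
          have hc1 : (S.1 ∩ S'.1).card = 1 := by rw [hint]; simp
          have hval : u S' = Phi n (Pi.single k 1 - Pi.single a 1) S' - v n S.1 S' := rfl
          rw [hval, hphi]
          simp [v, hk', hha, hc1]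
      have huW : u ∈ W := by
        rw [pi_decomp u]
        refine Submodule.sum_mem _ fun S' _ => ?_
        by_cases hkS' : k ∈ S'.1
        · rw [hu0 S' hkS', zero_smul]; exact Submodule.zero_mem _
        · exact Submodule.smul_mem _ _ (hsingle S' hkS')
      have hvu : v n S.1 = Phi n (Pi.single k 1 - Pi.single a 1) - u := by
        rw [hu]; abel
      rw [hvu]
      exact Submodule.sub_mem _ (hPhi _) huW
    · exact hvA S hk
  have hsingleAll : ∀ S : {S : Finset (Fin n) // S.card = 2}, Pi.single S (1:ℝ) ∈ W := by
    intro S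
    rw [single_eq n S]
    exact Submodule.smul_mem _ _ (Submodule.sub_mem _ (hPhi _) (hvAll S))
  rw [eq_top_iff]
  intro x _
  rw [pi_decomp x]
  exact Submodule.sum_mem _ fun S _ => Submodule.smul_mem _ _ (hsingleAll S)
end

section
/- Let n ≥ 4, k ∈ [n], and S = {s₁, k} a 2-element subset of [n]. Define a ∈ ℝ^n by a_{s₁} = n−4, a_k = 0, a_i = 1 otherwise. Then 2·e_S = ∑_{I ⊆ [n]∖{k}, |I|=2, s₁ ∈ I} v_I − Φ_n(a) in ℝ^T, where e_S is the S-th standard basis vector of ℝ^T. -/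
open Finset

lemma filter_eq_image_aux (n : ℕ) (k s₁ : Fin n) (hne : s₁ ≠ k) :
    ((Finset.powersetCard 2 ((Finset.univ : Finset (Fin n)).erase k)).filter
            (fun I => s₁ ∈ I))
    = ((Finset.univ.erase k).erase s₁).image (fun x => ({s₁, x} : Finset (Fin n))) := by
  ext I
  simp only [mem_filter, mem_powersetCard, mem_image, mem_erase, mem_univ, and_true]
  constructor
  · rintro ⟨⟨hsub, hcard⟩, hs₁⟩
    obtain ⟨a, b, hab, rfl⟩ := Finset.card_eq_two.mp hcard
    rcases mem_insert.mp hs₁ with rfl | hb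
    · refine ⟨b, ⟨hab.symm, ?_⟩, rfl⟩
      have := hsub (mem_insert_of_mem (mem_singleton_self b))
      exact (mem_erase.mp this).1
    · rw [mem_singleton] at hb; subst hb
      refine ⟨a, ⟨hab, ?_⟩, pair_comm s₁ a⟩
      have := hsub (mem_insert_self a _)
      exact (mem_erase.mp this).1
  · rintro ⟨x, ⟨hxs, hxk⟩, rfl⟩
    refine ⟨⟨?_, ?_⟩, mem_insert_self _ _⟩
    · intro y hy
      rcases mem_insert.mp hy with rfl | hy
      · exact mem_erase.mpr ⟨hne, mem_univ _⟩
      · rw [mem_singleton] at hy; subst hy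
        exact mem_erase.mpr ⟨hxk, mem_univ _⟩
    · exact card_pair (Ne.symm hxs)

lemma card_pair_inter_aux (n : ℕ) (s₁ x : Fin n) (hx : x ≠ s₁) (U : Finset (Fin n)) :
    ({s₁, x} ∩ U).card = (if s₁ ∈ U then 1 else 0) + (if x ∈ U then 1 else 0) := by
  rw [show ({s₁, x} : Finset (Fin n)) = insert s₁ {x} from rfl]
  by_cases hs : s₁ ∈ U
  · rw [insert_inter_of_mem hs]
    by_cases hxU : x ∈ U
    · rw [singleton_inter_of_mem hxU, if_pos hs, if_pos hxU]
      rw [card_insert_of_notMem (by simp [Ne.symm hx])]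
      simp
    · rw [singleton_inter_of_notMem hxU, if_pos hs, if_neg hxU]
      simp
  · rw [insert_inter_of_notMem hs, if_neg hs]
    by_cases hxU : x ∈ U
    · rw [singleton_inter_of_mem hxU, if_pos hxU]; simp
    · rw [singleton_inter_of_notMem hxU, if_neg hxU]; simp

theorem two_eS_eq (n : ℕ) (hn : 4 ≤ n) (k s₁ : Fin n) (hne : s₁ ≠ k)
    (S : {S : Finset (Fin n) // S.card = 2}) (hS : S.1 = {s₁, k}) :
    (2 : ℝ) • (Pi.single S 1 : {S : Finset (Fin n) // S.card = 2} → ℝ)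
      = (∑ I ∈ (Finset.powersetCard 2 ((Finset.univ : Finset (Fin n)).erase k)).filter
            (fun I => s₁ ∈ I), v n I)
        - Phi n (fun i => if i = s₁ then (n : ℝ) - 4 else if i = k then 0 else 1) := by
  classical
  funext U
  set E := ((Finset.univ : Finset (Fin n)).erase k).erase s₁ with hEdef
  have hsk : s₁ ∈ (Finset.univ : Finset (Fin n)).erase k := mem_erase.mpr ⟨hne, mem_univ _⟩
  have hEcard : E.card = n - 2 := by
    rw [hEdef, card_erase_of_mem hsk, card_erase_of_mem (mem_univ k), card_univ,
      Fintype.card_fin]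
    omega
  have hPhi : Phi n (fun i => if i = s₁ then (n : ℝ) - 4 else if i = k then 0 else 1) U
      = ∑ i ∈ U.1, (if i = s₁ then (n : ℝ) - 4 else if i = k then 0 else 1) := by
    simp [Phi]
  have hsum : (∑ I ∈ (Finset.powersetCard 2 ((Finset.univ : Finset (Fin n)).erase k)).filter
            (fun I => s₁ ∈ I), v n I) U
      = ∑ x ∈ E, v n {s₁, x} U := by
    rw [Finset.sum_apply, filter_eq_image_aux n k s₁ hne, Finset.sum_image]
    intro x hx y hy h
    have hxs : x ≠ s₁ := (mem_erase.mp hx).1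
    have : x ∈ ({s₁, y} : Finset (Fin n)) := (show ({s₁, x} : Finset (Fin n)) = {s₁, y} from h) ▸ mem_insert_of_mem (mem_singleton_self x)
    rcases mem_insert.mp this with h' | h'
    · exact absurd h' hxs
    · exact mem_singleton.mp h'
  have hv : ∀ x ∈ E, v n {s₁, x} U
      = if s₁ ∈ U.1 then (if x ∈ U.1 then (0:ℝ) else 1) else (if x ∈ U.1 then 1 else 0) := by
    intro x hx
    have hxs : x ≠ s₁ := (mem_erase.mp hx).1
    unfold v
    rw [card_pair_inter_aux n s₁ x hxs]
    by_cases h1 : s₁ ∈ U.1 <;> by_cases h2 : x ∈ U.1 <;> simp [h1, h2]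
  rw [Pi.smul_apply, Pi.sub_apply, hsum, hPhi, Finset.sum_congr rfl hv]
  by_cases hsU : s₁ ∈ U.1
  · by_cases hkU : k ∈ U.1
    · -- U = S
      have hU : U.1 = {s₁, k} := by
        refine (Finset.eq_of_subset_of_card_le ?_ ?_).symm
        · exact insert_subset hsU (singleton_subset_iff.mpr hkU)
        · rw [U.2, card_pair hne]
      have hUS : U = S := Subtype.ext (hU.trans hS.symm)
      subst hUS
      rw [Pi.single_eq_same]
      have hterm : ∀ x ∈ E, (if s₁ ∈ U.1 then (if x ∈ U.1 then (0:ℝ) else 1)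
          else (if x ∈ U.1 then 1 else 0)) = 1 := by
        intro x hx
        have hxs : x ≠ s₁ := (mem_erase.mp hx).1
        have hxk : x ≠ k := (mem_erase.mp (mem_erase.mp hx).2).1
        have hxU : x ∉ U.1 := by rw [hU]; simp [hxs, hxk]
        rw [if_pos hsU, if_neg hxU]
      rw [Finset.sum_congr rfl hterm, Finset.sum_const, nsmul_eq_mul, mul_one, hEcard]
      rw [hU, Finset.sum_pair hne, if_pos rfl, if_neg hne.symm, if_pos rfl]
      have : (2:ℕ) ≤ n := by omega
      push_cast [Nat.cast_sub this]
      norm_num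
    · -- s₁ ∈ U, k ∉ U
      have hUS : U ≠ S := by
        intro h; rw [h, hS] at hkU; exact hkU (by simp)
      rw [Pi.single_eq_of_ne hUS, smul_zero]
      obtain ⟨w, hw⟩ := Finset.card_eq_one.mp
        (by rw [card_erase_of_mem hsU, U.2] : (U.1.erase s₁).card = 1)
      have hU : U.1 = {s₁, w} := by
        rw [show ({s₁, w} : Finset (Fin n)) = insert s₁ {w} from rfl, ← hw,
          insert_erase hsU]
      have hws : w ≠ s₁ := (mem_erase.mp (hw ▸ mem_singleton_self w)).1
      have hwU : w ∈ U.1 := by rw [hU]; simp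
      have hwk : w ≠ k := by rintro rfl; exact hkU hwU
      have hwE : w ∈ E := mem_erase.mpr ⟨hws, mem_erase.mpr ⟨hwk, mem_univ _⟩⟩
      have hterm : ∀ x ∈ E, (if s₁ ∈ U.1 then (if x ∈ U.1 then (0:ℝ) else 1)
          else (if x ∈ U.1 then 1 else 0)) = 1 - (if x = w then 1 else 0) := by
        intro x hx
        have hxs : x ≠ s₁ := (mem_erase.mp hx).1
        have hxU : x ∈ U.1 ↔ x = w := by rw [hU]; simp [hxs]
        rw [if_pos hsU]
        by_cases hxw : x = w <;> simp [hxw, hxU, hwU]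
      rw [Finset.sum_congr rfl hterm, Finset.sum_sub_distrib, Finset.sum_const,
        Finset.sum_ite_eq' E w (fun _ => (1:ℝ)), if_pos hwE, nsmul_eq_mul, mul_one, hEcard]
      rw [hU, Finset.sum_pair (Ne.symm hws), if_pos rfl, if_neg hws, if_neg hwk]
      have : (2:ℕ) ≤ n := by omega
      push_cast [Nat.cast_sub this]
      ring
  · -- s₁ ∉ U
    have hUS : U ≠ S := by
      intro h; rw [h, hS] at hsU; exact hsU (by simp)
    rw [Pi.single_eq_of_ne hUS, smul_zero]
    have hterm : ∀ x ∈ E, (if s₁ ∈ U.1 then (if x ∈ U.1 then (0:ℝ) else 1)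
        else (if x ∈ U.1 then 1 else 0)) = (if x ∈ U.1 then 1 else 0) := by
      intro x _; rw [if_neg hsU]
    have hfil : E.filter (fun x => x ∈ U.1) = (U.1.erase k).erase s₁ := by
      ext x
      simp only [hEdef, mem_filter, mem_erase, mem_univ, and_true]
      tauto
    rw [Finset.sum_congr rfl hterm, Finset.sum_boole, hfil]
    have hterm2 : ∀ i ∈ U.1, (if i = s₁ then (n : ℝ) - 4 else if i = k then 0 else 1)
        = 1 - (if i = k then 1 else 0) := by
      intro i hi
      have his : i ≠ s₁ := by rintro rfl; exact hsU hi
      by_cases hik : i = k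
      · subst hik; simp [his]
      · simp [his, hik]
    rw [Finset.sum_congr rfl hterm2, Finset.sum_sub_distrib, Finset.sum_const,
      Finset.sum_ite_eq' U.1 k (fun _ => (1:ℝ)), U.2, nsmul_eq_mul, mul_one]
    have hers : s₁ ∉ U.1.erase k := fun h => hsU (mem_erase.mp h).2
    rw [erase_eq_of_notMem hers]
    by_cases hkU : k ∈ U.1
    · rw [card_erase_of_mem hkU, U.2, if_pos hkU]
      norm_num
    · rw [erase_eq_of_notMem hkU, U.2, if_neg hkU]
      norm_num
end

section
/- Fix k ∈ [n]. Then ∑_{S ⊆ [n]∖{k}, |S|=2} v_S = Φ_n(w), where w ∈ ℝ^n has entries w_i = n−3 for i ≠ k and w_k = 1. In particular, the sum of all vectors of V_k is zero in the quotient Q_n = ℝ^T / im(Φ_n). -/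
open Finset

lemma filter_pairs_eq {α : Type*} [DecidableEq α] (A U : Finset α) :
    ((A.powersetCard 2).filter (fun S => (S ∩ U).card = 1)) =
      ((A ∩ U) ×ˢ (A \ U)).image (fun p => {p.1, p.2}) := by
  ext S
  simp only [mem_filter, mem_powersetCard, mem_image, mem_product, mem_inter, mem_sdiff,
    Prod.exists]
  constructor
  · rintro ⟨⟨hSA, hS2⟩, h1⟩
    obtain ⟨x, hx⟩ := card_eq_one.mp h1
    have hdc : (S \ U).card = 1 := by
      have := Finset.card_inter_add_card_sdiff S U
      omega
    obtain ⟨y, hy⟩ := card_eq_one.mp hdc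
    have hxS : x ∈ S ∩ U := hx ▸ mem_singleton_self x
    have hyS : y ∈ S \ U := hy ▸ mem_singleton_self y
    simp only [mem_inter, mem_sdiff] at hxS hyS
    refine ⟨x, y, ⟨⟨hSA hxS.1, hxS.2⟩, hSA hyS.1, hyS.2⟩, ?_⟩
    have hxy : x ≠ y := fun h => hyS.2 (h ▸ hxS.2)
    have hsub : ({x, y} : Finset α) ⊆ S := by
      intro a ha
      rcases mem_insert.mp ha with rfl | ha
      · exact hxS.1
      · exact (mem_singleton.mp ha) ▸ hyS.1
    exact (Finset.eq_of_subset_of_card_le hsub (by rw [hS2, Finset.card_pair hxy]))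
  · rintro ⟨x, y, ⟨⟨hxA, hxU⟩, hyA, hyU⟩, rfl⟩
    have hxy : x ≠ y := fun h => hyU (h ▸ hxU)
    refine ⟨⟨?_, Finset.card_pair hxy⟩, ?_⟩
    · intro a ha
      rcases mem_insert.mp ha with rfl | ha
      · exact hxA
      · exact (mem_singleton.mp ha) ▸ hyA
    · have : ({x, y} : Finset α) ∩ U = {x} := by
        ext a
        simp only [mem_inter, mem_insert, mem_singleton]
        constructor
        · rintro ⟨rfl | rfl, haU⟩
          · rfl
          · exact absurd haU hyU
        · rintro rfl; exact ⟨Or.inl rfl, hxU⟩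
      rw [this, card_singleton]

lemma pairs_inj {α : Type*} [DecidableEq α] (A U : Finset α) :
    Set.InjOn (fun p : α × α => ({p.1, p.2} : Finset α))
      (↑((A ∩ U) ×ˢ (A \ U)) : Set (α × α)) := by
  rintro ⟨x1, y1⟩ h1 ⟨x2, y2⟩ h2 h
  simp only [coe_product, Set.mem_prod, mem_coe, mem_inter, mem_sdiff] at h1 h2
  simp only at h
  have hx1 : x1 ∈ ({x2, y2} : Finset α) := h ▸ mem_insert_self x1 {y1}
  have hy1 : y1 ∈ ({x2, y2} : Finset α) := h ▸ mem_insert_of_mem (mem_singleton_self y1)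
  rcases mem_insert.mp hx1 with rfl | hx1'
  · rcases mem_insert.mp hy1 with rfl | hy1'
    · exact absurd h2.1.2 h1.2.2
    · exact Prod.ext rfl (mem_singleton.mp hy1')
  · have := mem_singleton.mp hx1'
    subst this
    exact absurd h1.1.2 h2.2.2

theorem sum_Vk_in_image (n : ℕ) (hn : 4 ≤ n) (k : Fin n) :
    (∑ S ∈ Finset.powersetCard 2 ((Finset.univ : Finset (Fin n)).erase k), v n S)
        = Phi n (fun i => if i = k then 1 else (n : ℝ) - 3) ∧
      (∑ S ∈ Finset.powersetCard 2 ((Finset.univ : Finset (Fin n)).erase k),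
          Submodule.Quotient.mk (p := LinearMap.range (Phi n)) (v n S)) = 0 := by
  have main : (∑ S ∈ Finset.powersetCard 2 ((Finset.univ : Finset (Fin n)).erase k), v n S)
        = Phi n (fun i => if i = k then 1 else (n : ℝ) - 3) := by
    funext U
    have hU2 := U.2
    simp only [Finset.sum_apply, Phi, v, LinearMap.pi_apply, LinearMap.coe_sum,
      Finset.sum_apply, LinearMap.proj_apply]
    rw [Finset.sum_boole]
    have hfil : (((Finset.univ.erase k : Finset (Fin n)).powersetCard 2).filter
        (fun S => (S ∩ U.1).card = 1)) =
        (((Finset.univ.erase k : Finset (Fin n)) ∩ U.1) ×ˢ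
          ((Finset.univ.erase k : Finset (Fin n)) \ U.1)).image (fun p => {p.1, p.2}) :=
      filter_pairs_eq _ _
    rw [hfil, Finset.card_image_of_injOn (pairs_inj _ _), Finset.card_product]
    have hAU : (Finset.univ.erase k : Finset (Fin n)) ∩ U.1 = U.1.erase k := by
      ext a; simp [mem_erase, and_comm]
    have hcardA : ((Finset.univ : Finset (Fin n)).erase k).card = n - 1 := by
      simp [Finset.card_erase_of_mem]
    have hsd : ((Finset.univ.erase k : Finset (Fin n)) \ U.1).card
        = (n - 1) - (U.1.erase k).card := by
      rw [show (Finset.univ.erase k : Finset (Fin n)) \ U.1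
          = (Finset.univ.erase k : Finset (Fin n)) \ ((Finset.univ.erase k) ∩ U.1) by
        rw [Finset.sdiff_inter_self_left]]
      rw [Finset.card_sdiff_of_subset (Finset.inter_subset_left), hcardA, hAU]
    rw [hAU, hsd]
    have hsum : ∑ i ∈ U.1, (if i = k then (1:ℝ) else (n:ℝ)-3)
        = (U.1.card : ℝ) * ((n:ℝ)-3) + (if k ∈ U.1 then (1 - ((n:ℝ)-3)) else 0) := by
      have hpt : ∀ i, (if i = k then (1:ℝ) else (n:ℝ)-3)
          = ((n:ℝ)-3) + (if i = k then (1-((n:ℝ)-3)) else 0) := by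
        intro i; split <;> ring
      simp_rw [hpt, Finset.sum_add_distrib, Finset.sum_const, Finset.sum_ite_eq' U.1 k]
      simp [mul_comm]
    rw [hsum, hU2]
    obtain ⟨m, rfl⟩ : ∃ m, n = m + 4 := ⟨n - 4, by omega⟩
    by_cases hk : k ∈ U.1
    · have h1 : (U.1.erase k).card = 1 := by rw [Finset.card_erase_of_mem hk, hU2]
      rw [h1, if_pos hk]
      have : m + 4 - 1 - 1 = m + 2 := by omega
      rw [this]
      push_cast
      ring
    · have h1 : (U.1.erase k).card = 2 := by rw [Finset.erase_eq_of_notMem hk, hU2]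
      rw [h1, if_neg hk]
      have : m + 4 - 1 - 2 = m + 1 := by omega
      rw [this]
      push_cast
      ring
  refine ⟨main, ?_⟩
  have h2 := congrArg (Submodule.mkQ (LinearMap.range (Phi n))) main
  rw [map_sum] at h2
  simp only [Submodule.mkQ_apply] at h2
  rw [h2]
  exact (Submodule.Quotient.mk_eq_zero _).mpr ⟨_, rfl⟩
end

section
/- Let I ⊆ [n] with 1 < |I| < n−1 and k ∉ I, and write m = |I|. Then v_I = ∑_{S ⊆ I, |S|=2} v_S − (m−2)·Φ_n(∑_{i∈I} e_i) in ℝ^T. In particular, in Q_n = ℝ^T/im(Φ_n), v_I equals the sum of v_S over all 2-element subsets S of I. -/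
open Finset

private lemma count_pairs (n : ℕ) (I W : Finset (Fin n)) (hW : W ⊆ I) :
    ((powersetCard 2 I).filter (fun S => (S ∩ W).card = 1)).card
      = W.card * (I.card - W.card) := by
  rw [← Finset.card_sdiff_of_subset hW, ← Finset.card_product]
  symm
  apply (Finset.card_bij (fun p _ => ({p.1, p.2} : Finset (Fin n))) ?_ ?_ ?_)
  · rintro ⟨a, b⟩ hp
    simp only [Finset.mem_product, Finset.mem_sdiff] at hp
    obtain ⟨ha, hb, hbW⟩ := hp
    have hab : a ≠ b := fun h => hbW (h ▸ ha)
    simp only [Finset.mem_filter, Finset.mem_powersetCard]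
    refine ⟨⟨?_, ?_⟩, ?_⟩
    · exact Finset.insert_subset (hW ha) (Finset.singleton_subset_iff.mpr hb)
    · rw [Finset.card_insert_of_notMem (by simpa using hab), Finset.card_singleton]
    · have : ({a, b} : Finset (Fin n)) ∩ W = {a} := by
        ext x
        simp only [Finset.mem_inter, Finset.mem_insert, Finset.mem_singleton]
        constructor
        · rintro ⟨(rfl | rfl), hx⟩
          · rfl
          · exact absurd hx hbW
        · rintro rfl; exact ⟨Or.inl rfl, ha⟩
      rw [this, Finset.card_singleton]
  · rintro ⟨a, b⟩ hp ⟨a', b'⟩ hp' h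
    simp only [Finset.mem_product, Finset.mem_sdiff] at hp hp'
    obtain ⟨ha, hb, hbW⟩ := hp
    obtain ⟨ha', hb', hbW'⟩ := hp'
    simp only at h
    have h1 : a = a' := by
      have : a ∈ ({a', b'} : Finset (Fin n)) := h ▸ (by simp)
      rcases Finset.mem_insert.mp this with h' | h'
      · exact h'
      · exact absurd ha (by simp_all)
    have h2 : b = b' := by
      have : b ∈ ({a', b'} : Finset (Fin n)) := h ▸ (by simp)
      rcases Finset.mem_insert.mp this with h' | h'
      · exact absurd ha' (h' ▸ hbW)
      · simpa using h'
    simp [h1, h2]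
  · intro S hS
    simp only [Finset.mem_filter, Finset.mem_powersetCard] at hS
    obtain ⟨⟨hSI, hS2⟩, hSW⟩ := hS
    obtain ⟨a, ha⟩ := Finset.card_eq_one.mp hSW
    have haS : a ∈ S := by
      have : a ∈ S ∩ W := ha ▸ Finset.mem_singleton_self a
      exact (Finset.mem_inter.mp this).1
    have haW : a ∈ W := by
      have : a ∈ S ∩ W := ha ▸ Finset.mem_singleton_self a
      exact (Finset.mem_inter.mp this).2
    have hcard : (S.erase a).card = 1 := by
      rw [Finset.card_erase_of_mem haS, hS2]
    obtain ⟨b, hb⟩ := Finset.card_eq_one.mp hcard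
    have hbS : b ∈ S := Finset.erase_subset a S (hb ▸ Finset.mem_singleton_self b)
    have hba : b ≠ a := by
      have : b ∈ S.erase a := hb ▸ Finset.mem_singleton_self b
      exact Finset.ne_of_mem_erase this
    have hbW : b ∉ W := by
      intro hbW
      have : b ∈ S ∩ W := Finset.mem_inter.mpr ⟨hbS, hbW⟩
      rw [ha, Finset.mem_singleton] at this
      exact hba this
    refine ⟨⟨a, b⟩, ?_, ?_⟩
    · simp [Finset.mem_product, haW, Finset.mem_sdiff, hSI hbS, hbW]
    · have hins : S = insert a (S.erase a) := (Finset.insert_erase haS).symm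
      simp only
      rw [hins, hb]

private lemma Phi_apply_sum (n : ℕ) (I : Finset (Fin n))
    (U : {S : Finset (Fin n) // S.card = 2}) :
    Phi n (∑ i ∈ I, Pi.single i (1 : ℝ)) U = ((I ∩ U.1).card : ℝ) := by
  simp only [Phi, LinearMap.pi_apply, LinearMap.sum_apply, LinearMap.proj_apply]
  have h : ∀ j : Fin n, (∑ i ∈ I, Pi.single i (1 : ℝ)) j = if j ∈ I then 1 else 0 := by
    intro j
    rw [Finset.sum_apply]
    simp [Pi.single_apply]
  rw [Finset.sum_congr rfl (fun j _ => h j)]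
  rw [Finset.sum_boole, Finset.filter_mem_eq_inter, Finset.inter_comm]

private lemma sum_v_apply (n : ℕ) (I : Finset (Fin n))
    (U : {S : Finset (Fin n) // S.card = 2}) :
    (∑ S ∈ Finset.powersetCard 2 I, v n S) U
      = (((powersetCard 2 I).filter (fun S => (S ∩ (I ∩ U.1)).card = 1)).card : ℝ) := by
  have key : ∀ S ∈ powersetCard 2 I,
      v n S U = if (S ∩ (I ∩ U.1)).card = 1 then (1:ℝ) else 0 := by
    intro S hS
    have hSI : S ⊆ I := (Finset.mem_powersetCard.mp hS).1
    have h : S ∩ (I ∩ U.1) = S ∩ U.1 := by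
      rw [← Finset.inter_assoc, Finset.inter_eq_left.mpr hSI]
    rw [h]
    simp [v, Finset.inter_comm]
  rw [Finset.sum_apply, Finset.sum_congr rfl key, Finset.sum_boole]

theorem vI_representation (n : ℕ) (hn : 4 ≤ n) (I : Finset (Fin n)) (k : Fin n)
    (hk : k ∉ I) (h1 : 1 < I.card) (h2 : I.card < n - 1) :
    v n I = (∑ S ∈ Finset.powersetCard 2 I, v n S)
        - ((I.card : ℝ) - 2) • Phi n (∑ i ∈ I, Pi.single i (1 : ℝ)) ∧
      Submodule.Quotient.mk (p := LinearMap.range (Phi n)) (v n I)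
        = ∑ S ∈ Finset.powersetCard 2 I,
            Submodule.Quotient.mk (p := LinearMap.range (Phi n)) (v n S) := by
  have main : v n I = (∑ S ∈ Finset.powersetCard 2 I, v n S)
      - ((I.card : ℝ) - 2) • Phi n (∑ i ∈ I, Pi.single i (1 : ℝ)) := by
    funext U
    simp only [Pi.sub_apply, Pi.smul_apply, smul_eq_mul]
    rw [sum_v_apply, Phi_apply_sum, count_pairs n I (I ∩ U.1) Finset.inter_subset_left]
    set t := (I ∩ U.1).card with ht
    set m := I.card with hm
    have htm : t ≤ m := Finset.card_le_card Finset.inter_subset_left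
    have ht2 : t ≤ 2 := by
      calc t ≤ U.1.card := Finset.card_le_card Finset.inter_subset_right
        _ = 2 := U.2
    have hm2 : 2 ≤ m := h1
    show (if t = 1 then (1:ℝ) else 0) = (↑(t * (m - t)) : ℝ) - ((m:ℝ) - 2) * t
    interval_cases t
    · simp
    · rw [if_pos rfl]
      have h' : ((1 * (m - 1) : ℕ) : ℝ) = (m : ℝ) - 1 := by
        rw [one_mul, Nat.cast_sub (by omega)]
        push_cast; ring
      rw [h']; ring
    · rw [if_neg (by norm_num)]
      have h' : ((2 * (m - 2) : ℕ) : ℝ) = 2 * ((m : ℝ) - 2) := by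
        rw [Nat.cast_mul, Nat.cast_sub hm2]
        push_cast; ring
      rw [h']; ring
  refine ⟨main, ?_⟩
  have hmem : ((I.card : ℝ) - 2) • Phi n (∑ i ∈ I, Pi.single i (1 : ℝ))
      ∈ LinearMap.range (Phi n) :=
    Submodule.smul_mem _ _ (LinearMap.mem_range_self _ _)
  rw [main, Submodule.Quotient.mk_sub, (Submodule.Quotient.mk_eq_zero _).mpr hmem,
    sub_zero]
  exact map_sum (LinearMap.range (Phi n)).mkQ _ _
end
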